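/- Given three non-overlapping unit balls A, B, C in ℝ^d and a directed line ℓ meeting them in the order A, B, C, the angle between the direction of ℓ and the vector c − a is less than π/4. -/

import Mathlib

open Real

open Real

lemma key_ineq {F : Type*} [NormedAddCommGroup F] [InnerProductSpace ℝ F]
    (α β γ : F) (t u : ℝ) (hα : ‖α‖ ≤ 1) (hβ : ‖β‖ ≤ 1) (hγ : ‖γ‖ ≤ 1)
    (ht : 0 < t) (hu : 0 < u)
    (h1 : 4 ≤ t ^ 2 + ‖β - α‖ ^ 2) (h2 : 4 ≤ u ^ 2 + ‖γ - β‖ ^ 2) :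
    ‖γ - α‖ ^ 2 < (t + u) ^ 2 := by
  have eab : ‖β - α‖ ^ 2 = ‖β‖ ^ 2 - 2 * (inner ℝ β α : ℝ) + ‖α‖ ^ 2 :=
    norm_sub_sq_real β α
  have ew1 : ‖α + β‖ ^ 2 = ‖α‖ ^ 2 + 2 * (inner ℝ α β : ℝ) + ‖β‖ ^ 2 :=
    norm_add_sq_real α β
  have ebc : ‖γ - β‖ ^ 2 = ‖γ‖ ^ 2 - 2 * (inner ℝ γ β : ℝ) + ‖β‖ ^ 2 :=
    norm_sub_sq_real γ β
  have ew2 : ‖β + γ‖ ^ 2 = ‖β‖ ^ 2 + 2 * (inner ℝ β γ : ℝ) + ‖γ‖ ^ 2 :=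
    norm_add_sq_real β γ
  have cab : (inner ℝ β α : ℝ) = (inner ℝ α β : ℝ) := real_inner_comm α β
  have cbc : (inner ℝ γ β : ℝ) = (inner ℝ β γ : ℝ) := real_inner_comm β γ
  have hA1 : ‖α‖ ^ 2 ≤ 1 := pow_le_one₀ (norm_nonneg α) hα
  have hB1 : ‖β‖ ^ 2 ≤ 1 := pow_le_one₀ (norm_nonneg β) hβ
  have hC1 : ‖γ‖ ^ 2 ≤ 1 := pow_le_one₀ (norm_nonneg γ) hγ
  have hw1 : ‖α + β‖ ^ 2 ≤ t ^ 2 := by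
    linarith only [eab, ew1, cab, h1, hA1, hB1]
  have hw2 : ‖β + γ‖ ^ 2 ≤ u ^ 2 := by
    linarith only [ebc, ew2, cbc, h2, hB1, hC1]
  have hPt : (0 : ℝ) < ‖α + β‖ + t := by positivity
  have hQu : (0 : ℝ) < ‖β + γ‖ + u := by positivity
  have hw1' : ‖α + β‖ ≤ t := by nlinarith only [hw1, hPt]
  have hw2' : ‖β + γ‖ ≤ u := by nlinarith only [hw2, hQu]
  have key2 : -(inner ℝ (α + β) (β + γ) : ℝ) < t * u := by
    by_contra hcon
    push_neg at hcon
    have cs : -(inner ℝ (α + β) (β + γ) : ℝ) ≤ ‖α + β‖ * ‖β + γ‖ := by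
      have h1' := abs_real_inner_le_norm (α + β) (β + γ)
      have h2' := neg_abs_le (inner ℝ (α + β) (β + γ) : ℝ)
      linarith only [h1', h2']
    have hPQ : ‖α + β‖ * ‖β + γ‖ ≤ t * u :=
      mul_le_mul hw1' hw2' (norm_nonneg _) (le_of_lt ht)
    have hPQ' : t * u ≤ ‖α + β‖ * ‖β + γ‖ := le_trans hcon cs
    have hip : (inner ℝ (α + β) (β + γ) : ℝ) = -(t * u) := by
      linarith only [cs, hcon, hPQ]
    have hn1 : ‖α + β‖ = t := by
      have hstep : ‖α + β‖ * ‖β + γ‖ ≤ ‖α + β‖ * u :=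
        mul_le_mul_of_nonneg_left hw2' (norm_nonneg _)
      have htP : t * u ≤ ‖α + β‖ * u := le_trans hPQ' hstep
      have := le_of_mul_le_mul_right htP hu
      linarith only [this, hw1']
    have hn2 : ‖β + γ‖ = u := by
      have hstep : ‖α + β‖ * ‖β + γ‖ ≤ t * ‖β + γ‖ :=
        mul_le_mul_of_nonneg_right hw1' (norm_nonneg _)
      have htQ : t * u ≤ t * ‖β + γ‖ := le_trans hPQ' hstep
      have := le_of_mul_le_mul_left htQ ht
      linarith only [this, hw2']
    have hn1sq : ‖α + β‖ ^ 2 = t ^ 2 := by rw [hn1]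
    have hn2sq : ‖β + γ‖ ^ 2 = u ^ 2 := by rw [hn2]
    have hBe : ‖β‖ ^ 2 = 1 := by
      linarith only [ew1, eab, cab, hn1sq, h1, hA1, hB1]
    have hCe : ‖γ‖ ^ 2 = 1 := by
      linarith only [ew2, ebc, cbc, hn2sq, h2, hB1, hC1]
    have hmzero : ‖u • (α + β) + t • (β + γ)‖ ^ 2 = 0 := by
      rw [norm_add_sq_real, norm_smul, norm_smul, real_inner_smul_left,
        real_inner_smul_right, hn1, hn2, hip, Real.norm_eq_abs,
        Real.norm_eq_abs, abs_of_pos ht, abs_of_pos hu]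
      ring
    have hm : u • (α + β) + t • (β + γ) = 0 :=
      norm_eq_zero.mp (sq_eq_zero_iff.mp hmzero)
    have htne : (t : ℝ) ≠ 0 := ne_of_gt ht
    have hw2eq : β + γ = (-(u / t)) • (α + β) := by
      have h3 : t • (β + γ) = (-u) • (α + β) := by
        rw [neg_smul, eq_neg_iff_add_eq_zero, add_comm]; exact hm
      have h4 := congrArg (fun z => (t⁻¹ : ℝ) • z) h3
      simp only [← mul_smul, inv_mul_cancel₀ htne, one_smul] at h4
      rw [h4]
      congr 1
      field_simp
    have hinw1b : (inner ℝ (α + β) β : ℝ) = (inner ℝ α β : ℝ) + ‖β‖ ^ 2 := by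
      rw [inner_add_left, real_inner_self_eq_norm_sq]
    have htsq : t ^ 2 = 2 + 2 * (inner ℝ α β : ℝ) := by
      linarith only [ew1, hn1sq, hBe, eab, cab, h1, hA1]
    have hsum : (inner ℝ α β : ℝ) + ‖β‖ ^ 2 = t ^ 2 / 2 := by
      rw [hBe]; linarith only [htsq]
    have hγeq : γ = (β + γ) - β := by abel
    have hgam : ‖γ‖ ^ 2 = ‖β + γ‖ ^ 2 - 2 * (inner ℝ (β + γ) β : ℝ) + ‖β‖ ^ 2 := by
      conv_lhs => rw [hγeq]
      exact norm_sub_sq_real _ _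
    have hw2b : (inner ℝ (β + γ) β : ℝ) = -(u * t) / 2 := by
      rw [hw2eq, real_inner_smul_left, hinw1b, hsum]
      field_simp
    rw [hw2b, hCe, hBe, hn2sq] at hgam
    have hut : 0 < u * t := mul_pos hu ht
    nlinarith only [hgam, hut, sq_nonneg u]
  have efin : ‖γ - α‖ ^ 2
      = ‖α + β‖ ^ 2 - 2 * (inner ℝ (α + β) (β + γ) : ℝ) + ‖β + γ‖ ^ 2 := by
    have h : γ - α = (β + γ) - (α + β) := by abel
    rw [h, norm_sub_sq_real, real_inner_comm]; ring
  nlinarith only [key2, hw1, hw2, efin]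

lemma perp_norm_eq {F : Type*} [NormedAddCommGroup F] [InnerProductSpace ℝ F]
    (v w : F) (hv : ‖v‖ = 1) (s : ℝ) :
    ‖w - (inner ℝ w v : ℝ) • v‖ ^ 2 + ((inner ℝ w v : ℝ) - s) ^ 2 = ‖w - s • v‖ ^ 2 := by
  have hvv : (inner ℝ v v : ℝ) = 1 := by
    rw [real_inner_self_eq_norm_sq, hv]; norm_num
  have hwd : w - s • v = (w - (inner ℝ w v : ℝ) • v) + ((inner ℝ w v : ℝ) - s) • v := by
    rw [sub_smul]; abel
  have hperp : (inner ℝ (w - (inner ℝ w v : ℝ) • v) v : ℝ) = 0 := by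
    rw [inner_sub_left, real_inner_smul_left, hvv]; ring
  rw [hwd, norm_add_sq_real, real_inner_smul_right, hperp, norm_smul,
    Real.norm_eq_abs, hv]
  rw [mul_pow, sq_abs]
  ring


/-- if a directed line meets three non-overlapping unit balls in the order
`A B C`, then the angle between its direction and `c - a` is less than `π/4`. -/
theorem angle_direction_lt_pi_div_four {d : ℕ} (a b c : EuclideanSpace ℝ (Fin d))
    (hab : 2 ≤ dist a b) (hac : 2 ≤ dist a c) (hbc : 2 ≤ dist b c)
    (p v : EuclideanSpace ℝ (Fin d)) (hv : ‖v‖ = 1)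
    (hA : ∃ t : ℝ, dist (p + t • v) a ≤ 1)
    (hB : ∃ t : ℝ, dist (p + t • v) b ≤ 1)
    (hC : ∃ t : ℝ, dist (p + t • v) c ≤ 1)
    (hord1 : (inner ℝ a v : ℝ) < inner ℝ b v)
    (hord2 : (inner ℝ b v : ℝ) < inner ℝ c v) :
    InnerProductGeometry.angle v (c - a) < π / 4 := by
  classical
  set α := (a - p) - (inner ℝ (a - p) v : ℝ) • v with hαdef
  set β := (b - p) - (inner ℝ (b - p) v : ℝ) • v with hβdef
  set γ := (c - p) - (inner ℝ (c - p) v : ℝ) • v with hγdef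
  -- norms of perpendicular parts are ≤ 1
  have hperp_le : ∀ (w : EuclideanSpace ℝ (Fin d)) (s : ℝ),
      dist (p + s • v) w ≤ 1 → ‖(w - p) - (inner ℝ (w - p) v : ℝ) • v‖ ≤ 1 := by
    intro w s hws
    have hdist : dist (p + s • v) w = ‖(w - p) - s • v‖ := by
      rw [dist_comm, dist_eq_norm]
      congr 1
      abel
    have hpn := perp_norm_eq v (w - p) hv s
    have hle : ‖(w - p) - (inner ℝ (w - p) v : ℝ) • v‖ ^ 2 ≤ 1 := by
      have h1 : ‖(w - p) - s • v‖ ≤ 1 := by rw [← hdist]; exact hws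
      have h2 : ‖(w - p) - s • v‖ ^ 2 ≤ 1 := pow_le_one₀ (norm_nonneg _) h1
      nlinarith only [hpn, h2, sq_nonneg ((inner ℝ (w - p) v : ℝ) - s)]
    nlinarith only [hle, norm_nonneg ((w - p) - (inner ℝ (w - p) v : ℝ) • v)]
  obtain ⟨sa, hsa⟩ := hA
  obtain ⟨sb, hsb⟩ := hB
  obtain ⟨sc, hsc⟩ := hC
  have hα : ‖α‖ ≤ 1 := hperp_le a sa hsa
  have hβ : ‖β‖ ≤ 1 := hperp_le b sb hsb
  have hγ : ‖γ‖ ≤ 1 := hperp_le c sc hsc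
  set t : ℝ := (inner ℝ (b - a) v : ℝ) with htdef
  set u : ℝ := (inner ℝ (c - b) v : ℝ) with hudef
  have ht : 0 < t := by
    rw [htdef, inner_sub_left]; linarith only [hord1]
  have hu : 0 < u := by
    rw [hudef, inner_sub_left]; linarith only [hord2]
  -- differences of perpendicular parts
  have hdiff : ∀ (w w' : EuclideanSpace ℝ (Fin d)),
      ((w' - p) - (inner ℝ (w' - p) v : ℝ) • v) - ((w - p) - (inner ℝ (w - p) v : ℝ) • v)
        = (w' - w) - (inner ℝ (w' - w) v : ℝ) • v := by
    intro w w'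
    have hinner : (inner ℝ (w' - w) v : ℝ)
        = (inner ℝ (w' - p) v : ℝ) - (inner ℝ (w - p) v : ℝ) := by
      rw [inner_sub_left, inner_sub_left, inner_sub_left]; ring
    rw [hinner, sub_smul]
    abel
  -- squared distances along the line
  have hsplit : ∀ (w w' : EuclideanSpace ℝ (Fin d)),
      ‖(w' - w) - (inner ℝ (w' - w) v : ℝ) • v‖ ^ 2 + (inner ℝ (w' - w) v : ℝ) ^ 2
        = ‖w' - w‖ ^ 2 := by
    intro w w'
    have := perp_norm_eq v (w' - w) hv 0
    simpa using this
  have hba : β - α = (b - a) - t • v := by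
    rw [hαdef, hβdef, hdiff a b, htdef]
  have hcb : γ - β = (c - b) - u • v := by
    rw [hβdef, hγdef, hdiff b c, hudef]
  have hca : γ - α = (c - a) - (t + u) • v := by
    have h1 : γ - α = (c - a) - (inner ℝ (c - a) v : ℝ) • v := by
      rw [hαdef, hγdef, hdiff a c]
    have h2 : (inner ℝ (c - a) v : ℝ) = t + u := by
      rw [htdef, hudef, inner_sub_left, inner_sub_left, inner_sub_left]; ring
    rw [h1, h2]
  have hnab : ‖β - α‖ ^ 2 + t ^ 2 = ‖b - a‖ ^ 2 := by
    have h2 : β - α = (b - a) - (inner ℝ (b - a) v : ℝ) • v := by rw [hba, htdef]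
    rw [h2, ← htdef]
    have := hsplit a b
    rw [← htdef] at this
    exact this
  have hnbc : ‖γ - β‖ ^ 2 + u ^ 2 = ‖c - b‖ ^ 2 := by
    have h2 : γ - β = (c - b) - (inner ℝ (c - b) v : ℝ) • v := by rw [hcb, hudef]
    rw [h2, ← hudef]
    have := hsplit b c
    rw [← hudef] at this
    exact this
  have hnab4 : 4 ≤ ‖b - a‖ ^ 2 := by
    have h1 : dist a b = ‖b - a‖ := by rw [dist_comm, dist_eq_norm]
    nlinarith only [hab, h1, norm_nonneg (b - a)]
  have hnbc4 : 4 ≤ ‖c - b‖ ^ 2 := by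
    have h1 : dist b c = ‖c - b‖ := by rw [dist_comm, dist_eq_norm]
    nlinarith only [hbc, h1, norm_nonneg (c - b)]
  have h1 : 4 ≤ t ^ 2 + ‖β - α‖ ^ 2 := by linarith only [hnab, hnab4]
  have h2 : 4 ≤ u ^ 2 + ‖γ - β‖ ^ 2 := by linarith only [hnbc, hnbc4]
  have hkey := key_ineq α β γ t u hα hβ hγ ht hu h1 h2
  -- norm of c - a
  have hinner_ca : (inner ℝ (c - a) v : ℝ) = t + u := by
    rw [htdef, hudef, inner_sub_left, inner_sub_left, inner_sub_left]; ring
  have hnca : ‖γ - α‖ ^ 2 + (t + u) ^ 2 = ‖c - a‖ ^ 2 := by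
    have h3 : γ - α = (c - a) - (inner ℝ (c - a) v : ℝ) • v := by
      rw [hca, hinner_ca]
    rw [h3, hinner_ca]
    have := hsplit a c
    rw [hinner_ca] at this
    exact this
  have hN2 : ‖c - a‖ ^ 2 < 2 * (t + u) ^ 2 := by linarith only [hkey, hnca]
  have hNpos : 0 < ‖c - a‖ := by
    have h1 : dist a c = ‖c - a‖ := by rw [dist_comm, dist_eq_norm]
    linarith only [hac, h1]
  have hspos : 0 < t + u := by linarith only [ht, hu]
  have hinner_vca : (inner ℝ v (c - a) : ℝ) = t + u := by
    rw [real_inner_comm]; exact hinner_ca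
  have hcos : Real.cos (π / 4) < Real.cos (InnerProductGeometry.angle v (c - a)) := by
    rw [Real.cos_pi_div_four, InnerProductGeometry.cos_angle, hv, one_mul,
      hinner_vca]
    rw [div_lt_div_iff₀ (by norm_num : (0:ℝ) < 2) hNpos]
    nlinarith only [hN2, hspos, Real.sq_sqrt (by norm_num : (0:ℝ) ≤ 2),
      Real.sqrt_nonneg 2, hNpos]
  by_contra hcon
  push_neg at hcon
  have hmem1 : InnerProductGeometry.angle v (c - a) ∈ Set.Icc 0 π :=
    ⟨InnerProductGeometry.angle_nonneg _ _, InnerProductGeometry.angle_le_pi _ _⟩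
  have hmem2 : π / 4 ∈ Set.Icc 0 π := by
    constructor
    · positivity
    · linarith only [pi_pos]
  rcases eq_or_lt_of_le hcon with he | hl
  · rw [← he] at hcos; exact lt_irrefl _ hcos
  · have := Real.strictAntiOn_cos hmem2 hmem1 hl
    linarith only [this, hcos]
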